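/- A finite graph G satisfies property Δ-(*) if and only if G admits a graph homomorphism to H_Δ. -/

import Mathlib

/-- Property Δ-(*): there exist sets `R0, R1 ⊆ V(G)` with no edge between them such that
the induced subgraph on the complement of each `Ri` is `(Δ-1)`-colorable. -/
def PropertyStar {V : Type*} (G : SimpleGraph V) (Δ : ℕ) : Prop :=
  ∃ R0 R1 : Set V,
    (∀ a ∈ R0, ∀ b ∈ R1, ¬ G.Adj a b) ∧
    (G.induce R0ᶜ).Colorable (Δ - 1) ∧
    (G.induce R1ᶜ).Colorable (Δ - 1)

/-- Vertices of `H_Δ` (with `n = Δ - 1`): `V0 ⊕ V1 ⊕ P ⊕ {†}`. -/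
abbrev HVert (n : ℕ) := (Fin n ⊕ Fin n) ⊕ ((Fin n × Fin n) ⊕ Unit)

/-- One-directional adjacency relation generating `H_Δ`. -/
def HRel (n : ℕ) : HVert n → HVert n → Prop
  | Sum.inl (Sum.inl _), Sum.inl (Sum.inl _) => True
  | Sum.inl (Sum.inr _), Sum.inl (Sum.inr _) => True
  | Sum.inr (Sum.inl (i, j)), Sum.inr (Sum.inl (i', j')) => i ≠ i' ∧ j ≠ j'
  | Sum.inr (Sum.inr _), Sum.inr (Sum.inl _) => True
  | Sum.inl (Sum.inl i), Sum.inr (Sum.inl (i', _)) => i' ≠ i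
  | Sum.inl (Sum.inr j), Sum.inr (Sum.inl (_, j')) => j' ≠ j
  | _, _ => False

/-- The graph `H_Δ` with `n = Δ - 1`. -/
def HGraph (n : ℕ) : SimpleGraph (HVert n) := SimpleGraph.fromRel (HRel n)


lemma hgraph_adj {n : ℕ} {a b : HVert n} (hne : a ≠ b)
    (h : HRel n a b ∨ HRel n b a) : (HGraph n).Adj a b :=
  (SimpleGraph.fromRel_adj _ _ _).2 ⟨hne, h⟩

lemma hgraph_adj_iff {n : ℕ} {a b : HVert n} :
    (HGraph n).Adj a b ↔ a ≠ b ∧ (HRel n a b ∨ HRel n b a) :=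
  SimpleGraph.fromRel_adj _ _ _

/-- A finite graph `G` satisfies property Δ-(*) iff it admits a homomorphism to `H_Δ`. -/
theorem stmt_7 {V : Type*} [Fintype V] (G : SimpleGraph V) (Δ : ℕ) (hΔ : 2 < Δ) :
    PropertyStar G Δ ↔ Nonempty (G →g HGraph (Δ - 1)) := by
  classical
  constructor
  · rintro ⟨R0, R1, hR, ⟨c0⟩, ⟨c1⟩⟩
    have hc0 : ∀ a b (ha : a ∉ R0) (hb : b ∉ R0), G.Adj a b →
        c0 ⟨a, ha⟩ ≠ c0 ⟨b, hb⟩ := fun a b ha hb hab =>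
      c0.valid (by simpa using hab)
    have hc1 : ∀ a b (ha : a ∉ R1) (hb : b ∉ R1), G.Adj a b →
        c1 ⟨a, ha⟩ ≠ c1 ⟨b, hb⟩ := fun a b ha hb hab =>
      c1.valid (by simpa using hab)
    refine ⟨⟨fun v => if h0 : v ∈ R0 then
        (if h1 : v ∈ R1 then Sum.inr (Sum.inr ())
         else Sum.inl (Sum.inr (c1 ⟨v, h1⟩)))
      else if h1 : v ∈ R1 then Sum.inl (Sum.inl (c0 ⟨v, h0⟩))
      else Sum.inr (Sum.inl (c0 ⟨v, h0⟩, c1 ⟨v, h1⟩)), ?_⟩⟩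
    intro a b hab
    have hab' := G.adj_symm hab
    by_cases a0 : a ∈ R0
    · have b1 : b ∉ R1 := fun b1 => hR a a0 b b1 hab
      by_cases a1 : a ∈ R1
      · have b0 : b ∉ R0 := fun b0 => hR b b0 a a1 hab'
        simp only [dif_pos a0, dif_pos a1, dif_neg b0, dif_neg b1]
        exact hgraph_adj (by simp) (by simp [HRel])
      · by_cases b0 : b ∈ R0
        · simp only [dif_pos a0, dif_neg a1, dif_pos b0, dif_neg b1]
          exact hgraph_adj (by simp [hc1 a b a1 b1 hab]) (by simp [HRel])
        · simp only [dif_pos a0, dif_neg a1, dif_neg b0, dif_neg b1]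
          exact hgraph_adj (by simp) (by simp [HRel, (hc1 a b a1 b1 hab).symm])
    · by_cases a1 : a ∈ R1
      · have b0 : b ∉ R0 := fun b0 => hR b b0 a a1 hab'
        by_cases b1 : b ∈ R1
        · simp only [dif_neg a0, dif_pos a1, dif_neg b0, dif_pos b1]
          exact hgraph_adj (by simp [hc0 a b a0 b0 hab]) (by simp [HRel])
        · simp only [dif_neg a0, dif_pos a1, dif_neg b0, dif_neg b1]
          exact hgraph_adj (by simp) (by simp [HRel, (hc0 a b a0 b0 hab).symm])
      · by_cases b0 : b ∈ R0
        · by_cases b1 : b ∈ R1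
          · simp only [dif_neg a0, dif_neg a1, dif_pos b0, dif_pos b1]
            exact hgraph_adj (by simp) (by simp [HRel])
          · simp only [dif_neg a0, dif_neg a1, dif_pos b0, dif_neg b1]
            exact hgraph_adj (by simp) (by simp [HRel, (hc1 a b a1 b1 hab)])
        · by_cases b1 : b ∈ R1
          · simp only [dif_neg a0, dif_neg a1, dif_neg b0, dif_pos b1]
            exact hgraph_adj (by simp) (by simp [HRel, (hc0 a b a0 b0 hab)])
          · simp only [dif_neg a0, dif_neg a1, dif_neg b0, dif_neg b1]
            exact hgraph_adj (by simp [Prod.ext_iff, hc0 a b a0 b0 hab])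
              (by simp [HRel, hc0 a b a0 b0 hab, hc1 a b a1 b1 hab])
  · rintro ⟨f⟩
    have hn : 0 < Δ - 1 := by omega
    let z : Fin (Δ - 1) := ⟨0, hn⟩
    let p0 : HVert (Δ - 1) → Prop := fun x => match x with
      | Sum.inl (Sum.inl _) => True
      | Sum.inr (Sum.inr _) => True
      | _ => False
    let p1 : HVert (Δ - 1) → Prop := fun x => match x with
      | Sum.inl (Sum.inr _) => True
      | Sum.inr (Sum.inr _) => True
      | _ => False
    refine ⟨{v | p0 (f v)}, {v | p1 (f v)}, ?_, ?_, ?_⟩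
    · intro a ha b hb hab
      have h := hgraph_adj_iff.1 (f.map_adj hab)
      simp only [Set.mem_setOf_eq] at ha hb
      rcases hfa : f a with (i|j)|(⟨i,j⟩|u) <;>
        rcases hfb : f b with (i'|j')|(⟨i',j'⟩|u') <;>
        simp [p0, p1, HRel, hfa, hfb] at ha hb h
    · refine ⟨⟨fun v => match f ↑v with
        | Sum.inl (Sum.inr j) => j
        | Sum.inr (Sum.inl (_, j)) => j
        | _ => z, ?_⟩⟩
      intro v w hvw
      have hadj : G.Adj ↑v ↑w := by simpa using hvw
      have h := hgraph_adj_iff.1 (f.map_adj hadj)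
      have hv := v.2
      have hw := w.2
      simp only [Set.mem_compl_iff, Set.mem_setOf_eq] at hv hw
      rcases hfa : f ↑v with (i|j)|(⟨i,j⟩|u) <;>
        rcases hfb : f ↑w with (i'|j')|(⟨i',j'⟩|u') <;>
        simp [p0, p1, HRel, hfa, hfb] at hv hw h ⊢ <;> tauto
    · refine ⟨⟨fun v => match f ↑v with
        | Sum.inl (Sum.inl i) => i
        | Sum.inr (Sum.inl (i, _)) => i
        | _ => z, ?_⟩⟩
      intro v w hvw
      have hadj : G.Adj ↑v ↑w := by simpa using hvw
      have h := hgraph_adj_iff.1 (f.map_adj hadj)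
      have hv := v.2
      have hw := w.2
      simp only [Set.mem_compl_iff, Set.mem_setOf_eq] at hv hw
      rcases hfa : f ↑v with (i|j)|(⟨i,j⟩|u) <;>
        rcases hfb : f ↑w with (i'|j')|(⟨i',j'⟩|u') <;>
        simp [p0, p1, HRel, hfa, hfb] at hv hw h ⊢ <;> tauto
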